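/- Let κ be a regular uncountable cardinal and let U be a uniform ultrafilter on κ. If U has an almost-decreasing generating sequence ⟨A_i : i < θ⟩ with θ a regular cardinal and θ > κ, then the character of U equals θ: {A_i : i < θ} is a base for U of cardinality θ and no base for U has cardinality less than θ. -/

import Mathlib

universe u

open Cardinal Set

/-- `A ⊆* B` below the cardinal `κ`: the difference `A \ B` is bounded below `κ`
(where `κ` is identified with its set of ordinals `Set.Iio κ.ord`). -/
def AlmostSub (κ : Cardinal.{u}) (A B : Set Ordinal.{u}) : Prop :=
  ∃ β, β < κ.ord ∧ A \ B ⊆ Set.Iio β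

/-- An ultrafilter on the cardinal `κ`, identified with its set of ordinals `Set.Iio κ.ord`. -/
structure UltrafilterOn (κ : Cardinal.{u}) : Type (u + 1) where
  sets : Set (Set Ordinal.{u})
  sets_subset : ∀ A ∈ sets, A ⊆ Set.Iio κ.ord
  univ_mem : Set.Iio κ.ord ∈ sets
  superset_mem : ∀ A ∈ sets, ∀ B, B ⊆ Set.Iio κ.ord → A ⊆ B → B ∈ sets
  inter_mem : ∀ A ∈ sets, ∀ B ∈ sets, A ∩ B ∈ sets
  empty_not_mem : ∅ ∉ sets
  mem_or_compl_mem : ∀ A, A ⊆ Set.Iio κ.ord → A ∈ sets ∨ Set.Iio κ.ord \ A ∈ sets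

namespace UltrafilterOn

variable {κ : Cardinal.{u}}

/-- A uniform ultrafilter: every member has cardinality `κ`. -/
def IsUniform (U : UltrafilterOn κ) : Prop :=
  ∀ A ∈ U.sets, #A = Cardinal.lift.{u + 1, u} κ

/-- `κ`-completeness: `U` is closed under intersections of fewer than `κ` many of its members. -/
def IsComplete (U : UltrafilterOn κ) : Prop :=
  ∀ S : Set (Set Ordinal.{u}), S.Nonempty → S ⊆ U.sets →
    #S < Cardinal.lift.{u + 1, u} κ → ⋂₀ S ∈ U.sets

/-- Nonprincipal: no singleton is a member. -/
def IsNonprincipal (U : UltrafilterOn κ) : Prop :=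
  ∀ β : Ordinal.{u}, {β} ∉ U.sets

/-- A base for `U`: a subfamily `B ⊆ U` such that every member of `U` almost contains
a member of `B`. -/
def IsBase (U : UltrafilterOn κ) (B : Set (Set Ordinal.{u})) : Prop :=
  B ⊆ U.sets ∧ ∀ X ∈ U.sets, ∃ Y ∈ B, AlmostSub κ Y X

/-- The character of `U`: the least cardinality of a base for `U`. -/
noncomputable def char (U : UltrafilterOn κ) : Cardinal.{u + 1} :=
  sInf {c | ∃ B, U.IsBase B ∧ #B = c}

/-- `⟨A i : i < θord⟩` is an almost-decreasing generating sequence for `U`: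
its entries are members of `U`, it is `⊆*`-decreasing, and its range is a base for `U`. -/
def IsADGenSeq (U : UltrafilterOn κ) (θord : Ordinal.{u})
    (A : Ordinal.{u} → Set Ordinal.{u}) : Prop :=
  (∀ i, i < θord → A i ∈ U.sets) ∧
  (∀ i j, i ≤ j → j < θord → AlmostSub κ (A j) (A i)) ∧
  U.IsBase (A '' Set.Iio θord)

/-- A normal measure on `κ`: a `κ`-complete nonprincipal ultrafilter such that every
function regressive on a member of `U` is constant on a member of `U`. -/
def IsNormalMeasure (U : UltrafilterOn κ) : Prop :=
  U.IsComplete ∧ U.IsNonprincipal ∧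
  ∀ f : Ordinal.{u} → Ordinal.{u},
    (∃ X ∈ U.sets, ∀ α ∈ X, f α < α) → ∃ Y ∈ U.sets, ∃ c, ∀ α ∈ Y, f α = c

end UltrafilterOn

/-- `κ` is a measurable cardinal: it is uncountable and carries a `κ`-complete
nonprincipal ultrafilter. -/
def IsMeasurableCard (κ : Cardinal.{u}) : Prop :=
  ℵ₀ < κ ∧ ∃ U : UltrafilterOn κ, U.IsComplete ∧ U.IsNonprincipal

/-- `f <* g`: eventual (pointwise) domination below `ρord`. -/
def EvDomLt (ρord : Ordinal.{u}) (f g : Ordinal.{u} → Ordinal.{u}) : Prop :=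
  ∃ i₀, i₀ < ρord ∧ ∀ i, i₀ ≤ i → i < ρord → f i < g i

/-- Membership in the product `∏_{i < ρord} lam i` (of cardinals `lam i`). -/
def InProd (ρord : Ordinal.{u}) (lam : Ordinal.{u} → Cardinal.{u})
    (f : Ordinal.{u} → Ordinal.{u}) : Prop :=
  ∀ i, i < ρord → f i < (lam i).ord

/-- `⟨g η : η < ν⟩` is a scale of length `ν` in `∏_{i < ρord} lam i`:
a `<*`-increasing and `<*`-cofinal sequence in the product. -/
def IsScale (ρord : Ordinal.{u}) (lam : Ordinal.{u} → Cardinal.{u}) (ν : Cardinal.{u})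
    (g : Ordinal.{u} → Ordinal.{u} → Ordinal.{u}) : Prop :=
  (∀ η, η < ν.ord → InProd ρord lam (g η)) ∧
  (∀ η₁ η₂, η₁ < η₂ → η₂ < ν.ord → EvDomLt ρord (g η₁) (g η₂)) ∧
  ∀ f, InProd ρord lam f → ∃ η, η < ν.ord ∧ EvDomLt ρord f (g η)

/-- `supBelow μ i = sup_{i' < i} μ i'`. -/
noncomputable def supBelow (μ : Ordinal.{u} → Cardinal.{u}) (i : Ordinal.{u}) : Cardinal.{u} :=
  sSup {c | ∃ i', i' < i ∧ c = μ i'}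


lemma almostSub_trans {κ : Cardinal.{u}} {A B C : Set Ordinal.{u}}
    (h1 : AlmostSub κ A B) (h2 : AlmostSub κ B C) : AlmostSub κ A C := by
  obtain ⟨β₁, hβ₁, hs₁⟩ := h1
  obtain ⟨β₂, hβ₂, hs₂⟩ := h2
  refine ⟨max β₁ β₂, max_lt hβ₁ hβ₂, fun x hx => ?_⟩
  by_cases hxB : x ∈ B
  · exact Set.mem_Iio.mpr (lt_of_lt_of_le (Set.mem_Iio.mp (hs₂ ⟨hxB, hx.2⟩)) (le_max_right _ _))
  · exact Set.mem_Iio.mpr (lt_of_lt_of_le (Set.mem_Iio.mp (hs₁ ⟨hx.1, hxB⟩)) (le_max_left _ _))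

lemma mk_lt_of_bounded {κ : Cardinal.{u}} {T : Set Ordinal.{u}} {β : Ordinal.{u}}
    (hβ : β < κ.ord) (hT : T ⊆ Set.Iio β) : #T < Cardinal.lift.{u+1, u} κ := by
  calc #T ≤ #(Set.Iio β) := Cardinal.mk_le_mk_of_subset hT
    _ = Cardinal.lift.{u+1, u} β.card := Ordinal.mk_Iio_ordinal β
    _ < Cardinal.lift.{u+1, u} κ := by
        rw [Cardinal.lift_lt]; exact Cardinal.lt_ord.mp hβ

lemma exists_split {κ : Cardinal.{u}} (hκ : ℵ₀ ≤ κ) {t : Set Ordinal.{u}}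
    (ht : #t = Cardinal.lift.{u+1, u} κ) :
    ∃ S, S ⊆ t ∧ #S = Cardinal.lift.{u+1, u} κ ∧
      #(t \ S : Set Ordinal.{u}) = Cardinal.lift.{u+1, u} κ := by
  have hinf : ℵ₀ ≤ #t := by rw [ht]; exact Cardinal.aleph0_le_lift.mpr hκ
  have hsum : #(↥t ⊕ ↥t) = #(↥t) := by
    simp [Cardinal.mk_sum, Cardinal.add_eq_self hinf]
  obtain ⟨f⟩ := Cardinal.eq.mp hsum
  set L : Set ↥t := f '' (Set.range Sum.inl) with hL
  have hLcompl : Lᶜ = f '' (Set.range Sum.inr) := by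
    rw [hL, ← f.image_compl, Set.compl_range_inl]
  have hdiff : t \ (Subtype.val '' L) = Subtype.val '' Lᶜ := by
    ext x
    constructor
    · rintro ⟨hxt, hxL⟩
      exact ⟨⟨x, hxt⟩, fun h => hxL ⟨⟨x, hxt⟩, h, rfl⟩, rfl⟩
    · rintro ⟨⟨y, hy⟩, hyL, rfl⟩
      refine ⟨hy, ?_⟩
      rintro ⟨⟨z, hz⟩, hzL, hzx⟩
      cases Subtype.val_injective hzx
      exact hyL hzL
  refine ⟨Subtype.val '' L, ?_, ?_, ?_⟩
  · rintro x ⟨⟨y, hy⟩, _, rfl⟩; exact hy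
  · rw [Cardinal.mk_image_eq Subtype.val_injective, hL,
      Cardinal.mk_image_eq f.injective, Cardinal.mk_range_eq _ Sum.inl_injective, ← ht]
  · rw [hdiff, Cardinal.mk_image_eq Subtype.val_injective, hLcompl,
      Cardinal.mk_image_eq f.injective, Cardinal.mk_range_eq _ Sum.inr_injective, ← ht]

lemma not_almostSub_all {κ : Cardinal.{u}} (hκunc : ℵ₀ < κ) (U : UltrafilterOn κ)
    (hU : U.IsUniform) {t : Set Ordinal.{u}} (ht : t ∈ U.sets)
    (hall : ∀ X ∈ U.sets, AlmostSub κ t X) : False := by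
  obtain ⟨S, hSt, hS, hTS⟩ := exists_split hκunc.le (hU t ht)
  have hSsub : S ⊆ Set.Iio κ.ord := hSt.trans (U.sets_subset t ht)
  rcases U.mem_or_compl_mem S hSsub with hm | hm
  · obtain ⟨β, hβ, hb⟩ := hall S hm
    exact absurd hTS (ne_of_lt (mk_lt_of_bounded hβ hb))
  · obtain ⟨β, hβ, hb⟩ := hall _ hm
    have hSb : S ⊆ Set.Iio β := fun x hx =>
      hb ⟨hSt hx, fun hc => hc.2 hx⟩
    exact absurd hS (ne_of_lt (mk_lt_of_bounded hβ hSb))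

lemma base_card_ge {κ θ : Cardinal.{u}} (hκunc : ℵ₀ < κ) (U : UltrafilterOn κ)
    (hU : U.IsUniform) (hθreg : θ.IsRegular) (A : Ordinal.{u} → Set Ordinal.{u})
    (hA : U.IsADGenSeq θ.ord A) (B : Set (Set Ordinal.{u})) (hB : U.IsBase B) :
    Cardinal.lift.{u+1, u} θ ≤ #B := by
  by_contra hlt
  push_neg at hlt
  obtain ⟨hmemA, hdec, hAbase⟩ := hA
  obtain ⟨c, hc⟩ := Cardinal.mem_range_lift_of_le hlt.le
  have hcθ : c < θ := by rwa [← Cardinal.lift_lt.{u, u+1}, hc]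
  have heq : #(ULift.{u+1, u} (Quotient.out c)) = #(↥B) := by
    rw [Cardinal.mk_uLift, Cardinal.mk_out, hc]
  obtain ⟨e₀⟩ := Cardinal.eq.mp heq
  let e : Quotient.out c ≃ ↥B := Equiv.ulift.symm.trans e₀
  have hch : ∀ Y : ↥B, ∃ j, j < θ.ord ∧ AlmostSub κ (A j) Y.val := by
    intro Y
    obtain ⟨Z, hZ, hsub⟩ := hAbase.2 Y.val (hB.1 Y.prop)
    obtain ⟨j, hj, rfl⟩ := hZ
    exact ⟨j, hj, hsub⟩
  choose h hhlt hhsub using hch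
  set i := iSup (fun x : Quotient.out c => h (e x)) with hi
  have hiθ : i < θ.ord := by
    apply Cardinal.iSup_lt_ord_of_isRegular hθreg
    · rw [Cardinal.mk_out]; exact hcθ
    · intro x; exact hhlt _
  have hle : ∀ Y : ↥B, h Y ≤ i := by
    intro Y
    have := Ordinal.le_iSup (fun x : Quotient.out c => h (e x)) (e.symm Y)
    simpa using this
  have hex : ∃ j, j < θ.ord ∧ ¬ AlmostSub κ (A i) (A j) := by
    by_contra hno
    push_neg at hno
    apply not_almostSub_all hκunc U hU (hmemA i hiθ)
    intro X hX
    obtain ⟨Z, hZ, hsub⟩ := hAbase.2 X hX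
    obtain ⟨j, hj, rfl⟩ := hZ
    exact almostSub_trans (hno j hj) hsub
  obtain ⟨j, hj, hnot⟩ := hex
  obtain ⟨Y, hY, hYsub⟩ := hB.2 (A j) (hmemA j hj)
  exact hnot (almostSub_trans (almostSub_trans
    (hdec (h ⟨Y, hY⟩) i (hle ⟨Y, hY⟩) hiθ) (hhsub ⟨Y, hY⟩)) hYsub)


/-- if a uniform ultrafilter `U` on a regular uncountable cardinal `κ` has an
almost-decreasing generating sequence `⟨A i : i < θ⟩` with `θ` regular and `θ > κ`, then the
character of `U` equals `θ`: `{A i : i < θ}` is a base for `U` of cardinality `θ` and no base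
for `U` has cardinality less than `θ`. -/
theorem statement5 (κ θ : Cardinal.{u}) (hκreg : κ.IsRegular) (hκunc : ℵ₀ < κ)
    (U : UltrafilterOn κ) (hU : U.IsUniform)
    (hθreg : θ.IsRegular) (hκθ : κ < θ)
    (A : Ordinal.{u} → Set Ordinal.{u}) (hA : U.IsADGenSeq θ.ord A) :
    U.IsBase (A '' Set.Iio θ.ord) ∧
    #(A '' Set.Iio θ.ord) = Cardinal.lift.{u + 1, u} θ ∧
    (∀ B, U.IsBase B → Cardinal.lift.{u + 1, u} θ ≤ #B) ∧
    U.char = Cardinal.lift.{u + 1, u} θ := by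
  have h3 : ∀ B, U.IsBase B → Cardinal.lift.{u+1, u} θ ≤ #B :=
    fun B hB => base_card_ge hκunc U hU hθreg A hA B hB
  have hbase := hA.2.2
  have h2 : #(A '' Set.Iio θ.ord) = Cardinal.lift.{u+1, u} θ := by
    apply le_antisymm
    · calc #(A '' Set.Iio θ.ord) ≤ #(Set.Iio θ.ord) := Cardinal.mk_image_le
        _ = Cardinal.lift.{u+1, u} θ := by
            rw [Ordinal.mk_Iio_ordinal, Cardinal.card_ord]
    · exact h3 _ hbase
  refine ⟨hbase, h2, h3, ?_⟩
  apply le_antisymm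
  · exact csInf_le' ⟨_, hbase, h2⟩
  · refine le_csInf ⟨_, _, hbase, h2⟩ (fun c hc => ?_)
    obtain ⟨B, hB, rfl⟩ := hc
    exact h3 B hB
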